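/- Let d ≥ 2, let ψ be a unit vector in ℂ^d, and let Ω be a Hermitian operator on ℂ^d with 0 ≤ Ω ≤ I and Ωψ = ψ. Let q denote the supremum of ⟨φ, Ωφ⟩ over unit vectors φ with ⟨ψ, φ⟩ = 0. Then for every ε ∈ (0, 1], the supremum of tr(Ωσ) over all density matrices σ on ℂ^d satisfying ⟨ψ, σψ⟩ ≤ 1 − ε equals (1 − ε) + εq; moreover, if φ* is a unit vector orthogonal to ψ attaining q, then this supremum is attained by the pure state σ = |χ⟩⟨χ| with χ = √(1−ε)·ψ + √ε·φ*. -/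

import Mathlib

open Matrix ComplexOrder

/-- The performance parameter `q(Ω, ψ)`: the supremum of `⟨φ, Ωφ⟩` over unit
vectors `φ` orthogonal to `ψ`. -/
noncomputable def qparam {n : Type*} [Fintype n] [DecidableEq n]
    (Ω : Matrix n n ℂ) (ψ : n → ℂ) : ℝ :=
  sSup {x : ℝ | ∃ φ : n → ℂ, star φ ⬝ᵥ φ = 1 ∧ star ψ ⬝ᵥ φ = 0 ∧
    x = (star φ ⬝ᵥ (Ω *ᵥ φ)).re}

theorem Aux.conj_dot {n : Type*} [Fintype n] (a b : n → ℂ) :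
    starRingEnd ℂ (star a ⬝ᵥ b) = star b ⬝ᵥ a := by
  simp [dotProduct, map_sum, mul_comm]

theorem Aux.trace_mul_vecMulVec {n : Type*} [Fintype n] (A : Matrix n n ℂ) (χ : n → ℂ) :
    (A * vecMulVec χ (star χ)).trace = star χ ⬝ᵥ (A *ᵥ χ) := by
  simp only [Matrix.trace, Matrix.diag, Matrix.mul_apply, Matrix.vecMulVec_apply,
    dotProduct, Matrix.mulVec, Pi.star_apply, Finset.mul_sum]
  exact Finset.sum_congr rfl fun i _ => Finset.sum_congr rfl fun j _ => by ring

theorem Aux.psd_vecMulVec {n : Type*} [Fintype n] (χ : n → ℂ) :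
    (vecMulVec χ (star χ)).PosSemidef := by
  have : vecMulVec χ (star χ) = (Matrix.replicateCol (Fin 1) χ) * (Matrix.replicateCol (Fin 1) χ)ᴴ := by
    ext i j; simp [Matrix.vecMulVec_apply, Matrix.mul_apply, Matrix.replicateCol_apply]
  rw [this]
  exact Matrix.posSemidef_self_mul_conjTranspose _

theorem Aux.vmv_mulVec {n : Type*} [Fintype n] (w v x : n → ℂ) :
    vecMulVec w v *ᵥ x = (v ⬝ᵥ x) • w := by
  ext i
  simp only [Matrix.mulVec, Matrix.vecMulVec_apply, dotProduct, Pi.smul_apply, smul_eq_mul,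
    Finset.mul_sum, Finset.sum_mul]
  exact Finset.sum_congr rfl fun j _ => by ring

theorem Aux.herm_quad_im {n : Type*} [Fintype n] {A : Matrix n n ℂ} (hA : A.IsHermitian)
    (x : n → ℂ) : (star x ⬝ᵥ (A *ᵥ x)).im = 0 := by
  have : starRingEnd ℂ (star x ⬝ᵥ (A *ᵥ x)) = star x ⬝ᵥ (A *ᵥ x) := by
    rw [Aux.conj_dot, show star (A *ᵥ x) = star x ᵥ* Aᴴ from Matrix.star_mulVec A x, hA.eq,
      ← Matrix.dotProduct_mulVec]
  exact Complex.conj_eq_iff_im.mp this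

theorem Aux.psi_left {n : Type*} [Fintype n] {Ω : Matrix n n ℂ} {ψ : n → ℂ}
    (hH : Ω.IsHermitian) (hfix : Ω *ᵥ ψ = ψ) (v : n → ℂ) :
    star ψ ⬝ᵥ (Ω *ᵥ v) = star ψ ⬝ᵥ v := by
  rw [Matrix.dotProduct_mulVec]
  congr 1
  have h := Matrix.star_mulVec (M := Ωᴴ) (v := ψ)
  rw [hH.eq, hfix] at h
  rw [hH.eq] at h
  exact h.symm

theorem Aux.exists_unit_orth (d : ℕ) (hd : 2 ≤ d) (ψ : Fin d → ℂ) :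
    ∃ φ : Fin d → ℂ, star φ ⬝ᵥ φ = 1 ∧ star ψ ⬝ᵥ φ = 0 := by
  obtain ⟨v, hv0, hvorth⟩ : ∃ v : Fin d → ℂ, v ≠ 0 ∧ star ψ ⬝ᵥ v = 0 := by
    by_contra h
    push_neg at h
    set f : (Fin d → ℂ) →ₗ[ℂ] ℂ :=
      { toFun := fun v => star ψ ⬝ᵥ v
        map_add' := fun a b => by simp [dotProduct_add]
        map_smul' := fun c a => by simp [dotProduct_smul] } with hf
    have hinj : Function.Injective f := by
      rw [← LinearMap.ker_eq_bot, Submodule.eq_bot_iff]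
      intro v hv
      rcases eq_or_ne v 0 with rfl | hne
      · rfl
      · exact absurd (by simpa [hf] using hv) (h v hne)
    have := LinearMap.finrank_le_finrank_of_injective hinj
    simp [Module.finrank_fintype_fun_eq_card] at this
    omega
  have hpos : 0 < star v ⬝ᵥ v := Matrix.dotProduct_star_self_pos_iff.2 hv0
  have him : (star v ⬝ᵥ v).im = 0 := ((Complex.le_def).1 hpos.le).2.symm
  have hre : 0 < (star v ⬝ᵥ v).re := by
    rcases (Complex.lt_def).1 hpos with ⟨h1, _⟩; simpa using h1
  set c : ℝ := (star v ⬝ᵥ v).re with hc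
  have hvc : star v ⬝ᵥ v = (c : ℂ) := by apply Complex.ext <;> simp [him, hc]
  refine ⟨((Real.sqrt c)⁻¹ : ℂ) • v, ?_, ?_⟩
  · simp only [star_smul, smul_dotProduct, dotProduct_smul, hvc, smul_eq_mul]
    rw [show star (((Real.sqrt c : ℝ) : ℂ))⁻¹ = (((Real.sqrt c : ℝ) : ℂ))⁻¹ by
      simp [Complex.star_def, ← Complex.ofReal_inv, Complex.conj_ofReal]]
    rw [← Complex.ofReal_inv, ← Complex.ofReal_mul, ← Complex.ofReal_mul, ← Complex.ofReal_one]
    congr 1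
    rw [← mul_assoc, ← mul_inv, Real.mul_self_sqrt hre.le]
    field_simp
  · simp [dotProduct_smul, hvorth]

theorem Aux.quad_le_q {n : Type*} [Fintype n] [DecidableEq n]
    (Ω : Matrix n n ℂ) (ψ : n → ℂ)
    (hQb : BddAbove {x : ℝ | ∃ φ : n → ℂ, star φ ⬝ᵥ φ = 1 ∧ star ψ ⬝ᵥ φ = 0 ∧
      x = (star φ ⬝ᵥ (Ω *ᵥ φ)).re})
    (y : n → ℂ) (hy : star ψ ⬝ᵥ y = 0) :
    (star y ⬝ᵥ (Ω *ᵥ y)).re ≤ qparam Ω ψ * (star y ⬝ᵥ y).re := by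
  rcases eq_or_ne y 0 with rfl | hy0
  · simp
  have hpos : 0 < star y ⬝ᵥ y := Matrix.dotProduct_star_self_pos_iff.2 hy0
  have hre : 0 < (star y ⬝ᵥ y).re := by
    rcases (Complex.lt_def).1 hpos with ⟨h1, _⟩; simpa using h1
  have him : (star y ⬝ᵥ y).im = 0 := ((Complex.le_def).1 hpos.le).2.symm
  set c : ℝ := (star y ⬝ᵥ y).re with hc
  have hyc : star y ⬝ᵥ y = (c : ℂ) := by apply Complex.ext <;> simp [him, hc]
  set φ : n → ℂ := ((Real.sqrt c)⁻¹ : ℂ) • y with hφ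
  have hstar : star (((Real.sqrt c : ℝ) : ℂ))⁻¹ = (((Real.sqrt c : ℝ) : ℂ))⁻¹ := by
    simp [Complex.star_def, ← Complex.ofReal_inv, Complex.conj_ofReal]
  have hsq : ((Real.sqrt c : ℂ))⁻¹ * ((Real.sqrt c : ℂ))⁻¹ = ((c⁻¹ : ℝ) : ℂ) := by
    rw [← Complex.ofReal_inv, ← Complex.ofReal_mul]
    congr 1
    rw [← mul_inv, Real.mul_self_sqrt hre.le]
  have hmem : ((c⁻¹ : ℝ) * (star y ⬝ᵥ (Ω *ᵥ y)).re) ∈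
      {x : ℝ | ∃ φ : n → ℂ, star φ ⬝ᵥ φ = 1 ∧ star ψ ⬝ᵥ φ = 0 ∧
        x = (star φ ⬝ᵥ (Ω *ᵥ φ)).re} := by
    refine ⟨φ, ?_, ?_, ?_⟩
    · simp only [hφ, star_smul, smul_dotProduct, dotProduct_smul, smul_eq_mul,
        hstar, hyc]
      rw [← mul_assoc, hsq, ← Complex.ofReal_mul]
      norm_cast
      field_simp
    · simp [hφ, dotProduct_smul, hy]
    · simp only [hφ, star_smul, smul_dotProduct, dotProduct_smul,
        Matrix.mulVec_smul, smul_eq_mul, hstar]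
      rw [← mul_assoc, hsq]
      simp
  have hle := le_csSup hQb hmem
  rw [qparam]
  have h2 : (star y ⬝ᵥ (Ω *ᵥ y)).re = c * (c⁻¹ * (star y ⬝ᵥ (Ω *ᵥ y)).re) := by
    field_simp
  rw [h2]
  calc c * (c⁻¹ * (star y ⬝ᵥ (Ω *ᵥ y)).re) ≤ c * sSup _ := by
        apply mul_le_mul_of_nonneg_left hle hre.le
    _ = _ := by ring

theorem Aux.psd_trace_nonneg {n : Type*} [Fintype n] [DecidableEq n] {A : Matrix n n ℂ}
    (hA : A.PosSemidef) : 0 ≤ A.trace := by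
  rw [Matrix.trace]
  apply Finset.sum_nonneg
  intro i _
  have h2 := hA.dotProduct_mulVec_nonneg (Pi.single i 1)
  have hd : star (Pi.single i 1 : n → ℂ) ⬝ᵥ (A *ᵥ Pi.single i 1) = A i i := by
    have hs : star (Pi.single i 1 : n → ℂ) = Pi.single i 1 := by
      ext j; by_cases h : j = i <;> simp [Pi.single_apply, h]
    rw [hs, single_dotProduct]
    simp [Matrix.mulVec_single]
  rwa [hd] at h2

theorem Aux.psd_trace_mul_nonneg {n : Type*} [Fintype n] [DecidableEq n]
    {A B : Matrix n n ℂ} (hA : A.PosSemidef) (hB : B.PosSemidef) :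
    0 ≤ (A * B).trace := by
  open scoped MatrixOrder in
  · have hS : (CFC.sqrt A).PosSemidef := (CFC.sqrt_nonneg A).posSemidef
    have h1 : A * B = CFC.sqrt A * (CFC.sqrt A * B) := by
      rw [← mul_assoc, CFC.sqrt_mul_sqrt_self A hA.nonneg]
    rw [h1, Matrix.trace_mul_comm]
    have h2 : CFC.sqrt A * B * CFC.sqrt A = (CFC.sqrt A)ᴴ * B * CFC.sqrt A := by
      rw [hS.isHermitian.eq]
    rw [h2]
    exact Aux.psd_trace_nonneg (hB.conjTranspose_mul_mul_same _)

/-- The construction part: properties of the pure state built from `ψ` and a unit vector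
orthogonal to `ψ`. -/
theorem Aux.constr {d : ℕ} {ψ : Fin d → ℂ} (hψ : star ψ ⬝ᵥ ψ = 1)
    {Ω : Matrix (Fin d) (Fin d) ℂ} (hH : Ω.IsHermitian) (hfix : Ω *ᵥ ψ = ψ)
    {ε : ℝ} (hε : 0 < ε) (hε1 : ε ≤ 1)
    (φ : Fin d → ℂ) (hφ1 : star φ ⬝ᵥ φ = 1) (hφ2 : star ψ ⬝ᵥ φ = 0)
    (χ : Fin d → ℂ) (hχ : χ = (Real.sqrt (1 - ε) : ℂ) • ψ + (Real.sqrt ε : ℂ) • φ) :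
    (vecMulVec χ (star χ)).PosSemidef ∧ (vecMulVec χ (star χ)).trace = 1 ∧
    (star ψ ⬝ᵥ (vecMulVec χ (star χ) *ᵥ ψ)).re ≤ 1 - ε ∧
    (Ω * vecMulVec χ (star χ)).trace.re = (1 - ε) + ε * (star φ ⬝ᵥ (Ω *ᵥ φ)).re := by
  set a : ℂ := (Real.sqrt (1 - ε) : ℂ) with ha
  set b : ℂ := (Real.sqrt ε : ℂ) with hb
  have hsa : star a = a := by rw [ha]; simp [Complex.star_def, Complex.conj_ofReal]
  have hsb : star b = b := by rw [hb]; simp [Complex.star_def, Complex.conj_ofReal]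
  have ha2 : a * a = ((1 - ε : ℝ) : ℂ) := by
    rw [ha, ← Complex.ofReal_mul, Real.mul_self_sqrt (by linarith)]
  have hb2 : b * b = ((ε : ℝ) : ℂ) := by
    rw [hb, ← Complex.ofReal_mul, Real.mul_self_sqrt hε.le]
  have hφψ : star φ ⬝ᵥ ψ = 0 := by
    rw [← Aux.conj_dot, hφ2, map_zero]
  have hψΩφ : star ψ ⬝ᵥ (Ω *ᵥ φ) = 0 := by rw [Aux.psi_left hH hfix, hφ2]
  have hφΩψ : star φ ⬝ᵥ (Ω *ᵥ ψ) = 0 := by rw [hfix, hφψ]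
  have hψΩψ : star ψ ⬝ᵥ (Ω *ᵥ ψ) = 1 := by rw [Aux.psi_left hH hfix, hψ]
  -- dot products with χ
  have hcast : ((1 - ε : ℝ) : ℂ) + ((ε : ℝ) : ℂ) = 1 := by push_cast; ring
  have hχχ : star χ ⬝ᵥ χ = 1 := by
    rw [hχ]
    simp only [star_add, star_smul, add_dotProduct, dotProduct_add,
      smul_dotProduct, dotProduct_smul, smul_eq_mul, hsa, hsb,
      hψ, hφ1, hφ2, hφψ]
    linear_combination ha2 + hb2 + hcast
  have hψχ : star ψ ⬝ᵥ χ = a := by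
    rw [hχ]
    simp only [dotProduct_add, dotProduct_smul, smul_eq_mul, hψ, hφ2]
    ring
  have hχψ : star χ ⬝ᵥ ψ = a := by
    rw [← Aux.conj_dot, hψχ, ha, Complex.conj_ofReal]
  have key : star χ ⬝ᵥ (Ω *ᵥ χ)
      = ((1 - ε : ℝ) : ℂ) + ((ε : ℝ) : ℂ) * (star φ ⬝ᵥ (Ω *ᵥ φ)) := by
    rw [hχ]
    simp only [Matrix.mulVec_add, Matrix.mulVec_smul, star_add, star_smul,
      add_dotProduct, dotProduct_add, smul_dotProduct,
      dotProduct_smul, smul_eq_mul, hsa, hsb, hψΩψ, hψΩφ, hφΩψ]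
    linear_combination ha2 + (star φ ⬝ᵥ (Ω *ᵥ φ)) * hb2
  refine ⟨Aux.psd_vecMulVec χ, ?_, ?_, ?_⟩
  · have h1 := Aux.trace_mul_vecMulVec (1 : Matrix (Fin d) (Fin d) ℂ) χ
    rw [Matrix.one_mul, Matrix.one_mulVec] at h1
    rw [h1, hχχ]
  · rw [Aux.vmv_mulVec, dotProduct_smul, hχψ, hψχ, smul_eq_mul, ha2]
    simp
  · rw [Aux.trace_mul_vecMulVec, key]
    simp [Complex.add_re, Complex.re_ofReal_mul]

/-- Upper bound: any feasible density matrix has objective at most `(1-ε) + ε q`. -/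
theorem Aux.upper {d : ℕ} {ψ : Fin d → ℂ} (hψ : star ψ ⬝ᵥ ψ = 1)
    {Ω : Matrix (Fin d) (Fin d) ℂ} (hΩ : Ω.PosSemidef) (hfix : Ω *ᵥ ψ = ψ)
    {ε : ℝ} (hε : 0 < ε)
    (hQb : BddAbove {x : ℝ | ∃ φ : Fin d → ℂ, star φ ⬝ᵥ φ = 1 ∧ star ψ ⬝ᵥ φ = 0 ∧
      x = (star φ ⬝ᵥ (Ω *ᵥ φ)).re})
    (hq1 : qparam Ω ψ ≤ 1)
    (σ : Matrix (Fin d) (Fin d) ℂ) (hσ : σ.PosSemidef) (hσtr : σ.trace = 1)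
    (hσψ : (star ψ ⬝ᵥ (σ *ᵥ ψ)).re ≤ 1 - ε) :
    (Ω * σ).trace.re ≤ (1 - ε) + ε * qparam Ω ψ := by
  set q : ℝ := qparam Ω ψ with hqdef
  set P : Matrix (Fin d) (Fin d) ℂ := vecMulVec ψ (star ψ) with hPdef
  set D : Matrix (Fin d) (Fin d) ℂ := (q : ℂ) • 1 + ((1 - q : ℝ) : ℂ) • P - Ω with hDdef
  have hPherm : P.IsHermitian := (Aux.psd_vecMulVec ψ).isHermitian
  have hDh : D.IsHermitian := by
    show Dᴴ = D
    rw [hDdef]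
    simp [Matrix.conjTranspose_sub, Matrix.conjTranspose_add, Matrix.conjTranspose_smul,
      Matrix.conjTranspose_one, hΩ.isHermitian.eq, hPherm.eq, Complex.star_def,
      Complex.conj_ofReal]
  have hD : D.PosSemidef := by
    refine Matrix.PosSemidef.of_dotProduct_mulVec_nonneg hDh fun x => ?_
    set c : ℂ := star ψ ⬝ᵥ x with hcdef
    set y : Fin d → ℂ := x - c • ψ with hydef
    have hx : x = c • ψ + y := by rw [hydef]; abel
    have hyo : star ψ ⬝ᵥ y = 0 := by
      rw [hydef]
      simp [dotProduct_sub, dotProduct_smul, hψ, hcdef]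
    have hyψ : star y ⬝ᵥ ψ = 0 := by rw [← Aux.conj_dot, hyo, map_zero]
    have hΩψy : star ψ ⬝ᵥ (Ω *ᵥ y) = 0 := by rw [Aux.psi_left hΩ.isHermitian hfix, hyo]
    have hyΩψ : star y ⬝ᵥ (Ω *ᵥ ψ) = 0 := by rw [hfix, hyψ]
    have hψΩψ : star ψ ⬝ᵥ (Ω *ᵥ ψ) = 1 := by rw [Aux.psi_left hΩ.isHermitian hfix, hψ]
    have hxx : star x ⬝ᵥ x = star c * c + star y ⬝ᵥ y := by
      rw [hx]
      simp only [star_add, star_smul, add_dotProduct, dotProduct_add,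
        smul_dotProduct, dotProduct_smul, smul_eq_mul, hψ, hyo, hyψ]
      ring
    have hxψ : star x ⬝ᵥ ψ = star c := by rw [← Aux.conj_dot, ← hcdef, Complex.star_def]
    have hPx : star x ⬝ᵥ (P *ᵥ x) = star c * c := by
      rw [hPdef, Aux.vmv_mulVec, ← hcdef, dotProduct_smul, smul_eq_mul, hxψ]
      ring
    have hΩxx : star x ⬝ᵥ (Ω *ᵥ x) = star c * c + star y ⬝ᵥ (Ω *ᵥ y) := by
      rw [hx]
      simp only [Matrix.mulVec_add, Matrix.mulVec_smul, star_add, star_smul,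
        add_dotProduct, dotProduct_add, smul_dotProduct,
        dotProduct_smul, smul_eq_mul, hψΩψ, hΩψy, hyΩψ]
      ring
    have hz : star x ⬝ᵥ (D *ᵥ x) = ((q : ℝ) : ℂ) * (star y ⬝ᵥ y) - star y ⬝ᵥ (Ω *ᵥ y) := by
      rw [hDdef]
      simp only [Matrix.add_mulVec, Matrix.sub_mulVec, Matrix.smul_mulVec,
        Matrix.one_mulVec, dotProduct_add, dotProduct_sub,
        dotProduct_smul, smul_eq_mul, hxx, hPx, hΩxx]
      push_cast
      ring
    rw [hz]
    have hyy := dotProduct_star_self_nonneg y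
    have hyyim : (star y ⬝ᵥ y).im = 0 := ((Complex.le_def).1 hyy).2.symm
    have hΩyim : (star y ⬝ᵥ (Ω *ᵥ y)).im = 0 := Aux.herm_quad_im hΩ.isHermitian y
    have hquad := Aux.quad_le_q Ω ψ hQb y hyo
    rw [Complex.le_def]
    constructor
    · simp only [Complex.zero_re, Complex.sub_re, Complex.re_ofReal_mul]
      rw [hqdef]
      linarith
    · simp [Complex.sub_im, Complex.mul_im, hyyim, hΩyim]
  have htr := Aux.psd_trace_mul_nonneg hD hσ
  have htrP : (P * σ).trace = star ψ ⬝ᵥ (σ *ᵥ ψ) := by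
    rw [Matrix.trace_mul_comm, hPdef, Aux.trace_mul_vecMulVec]
  have hexp : (D * σ).trace = ((q : ℝ) : ℂ) + ((1 - q : ℝ) : ℂ) * (star ψ ⬝ᵥ (σ *ᵥ ψ))
      - (Ω * σ).trace := by
    rw [hDdef, Matrix.sub_mul, Matrix.add_mul, Matrix.smul_mul, Matrix.smul_mul,
      Matrix.one_mul, Matrix.trace_sub, Matrix.trace_add, Matrix.trace_smul,
      Matrix.trace_smul, hσtr, htrP]
    simp
  rw [hexp] at htr
  have hre := ((Complex.le_def).1 htr).1
  simp only [Complex.zero_re, Complex.sub_re, Complex.add_re, Complex.ofReal_re,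
    Complex.re_ofReal_mul] at hre
  nlinarith [hre, hσψ, hq1]

theorem stmt_0 (d : ℕ) (hd : 2 ≤ d)
    (ψ : Fin d → ℂ) (hψ : star ψ ⬝ᵥ ψ = 1)
    (Ω : Matrix (Fin d) (Fin d) ℂ)
    (hΩ : Ω.PosSemidef) (hΩI : ((1 : Matrix (Fin d) (Fin d) ℂ) - Ω).PosSemidef)
    (hfix : Ω *ᵥ ψ = ψ)
    (ε : ℝ) (hε : 0 < ε) (hε1 : ε ≤ 1) :
    sSup {x : ℝ | ∃ σ : Matrix (Fin d) (Fin d) ℂ, σ.PosSemidef ∧ σ.trace = 1 ∧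
        (star ψ ⬝ᵥ (σ *ᵥ ψ)).re ≤ 1 - ε ∧ x = (Ω * σ).trace.re}
      = (1 - ε) + ε * qparam Ω ψ ∧
    ∀ φs : Fin d → ℂ, star φs ⬝ᵥ φs = 1 → star ψ ⬝ᵥ φs = 0 →
      (star φs ⬝ᵥ (Ω *ᵥ φs)).re = qparam Ω ψ →
      ∀ χ : Fin d → ℂ,
        χ = (Real.sqrt (1 - ε) : ℂ) • ψ + (Real.sqrt ε : ℂ) • φs →
        (vecMulVec χ (star χ)).PosSemidef ∧ (vecMulVec χ (star χ)).trace = 1 ∧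
        (star ψ ⬝ᵥ (vecMulVec χ (star χ) *ᵥ ψ)).re ≤ 1 - ε ∧
        (Ω * vecMulVec χ (star χ)).trace.re = (1 - ε) + ε * qparam Ω ψ := by
  set Q : Set ℝ := {x : ℝ | ∃ φ : Fin d → ℂ, star φ ⬝ᵥ φ = 1 ∧ star ψ ⬝ᵥ φ = 0 ∧
    x = (star φ ⬝ᵥ (Ω *ᵥ φ)).re} with hQdef
  set S : Set ℝ := {x : ℝ | ∃ σ : Matrix (Fin d) (Fin d) ℂ, σ.PosSemidef ∧ σ.trace = 1 ∧
    (star ψ ⬝ᵥ (σ *ᵥ ψ)).re ≤ 1 - ε ∧ x = (Ω * σ).trace.re} with hSdef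
  have hq : qparam Ω ψ = sSup Q := rfl
  -- Q is nonempty
  obtain ⟨φ₀, hφ₀1, hφ₀2⟩ := Aux.exists_unit_orth d hd ψ
  have hQne : Q.Nonempty := ⟨_, φ₀, hφ₀1, hφ₀2, rfl⟩
  -- Q is bounded above by 1
  have hQb1 : ∀ x ∈ Q, x ≤ 1 := by
    rintro x ⟨φ, h1, h2, rfl⟩
    have := hΩI.dotProduct_mulVec_nonneg φ
    rw [Matrix.sub_mulVec, Matrix.one_mulVec, dotProduct_sub, h1] at this
    have hre := ((Complex.le_def).1 this).1
    simp only [Complex.zero_re, Complex.sub_re, Complex.one_re] at hre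
    linarith
  have hQb : BddAbove Q := ⟨1, hQb1⟩
  have hq1 : qparam Ω ψ ≤ 1 := by rw [hq]; exact csSup_le hQne hQb1
  -- upper bound for S
  have hub : ∀ s ∈ S, s ≤ (1 - ε) + ε * qparam Ω ψ := by
    rintro s ⟨σ, hσ, hσtr, hσψ, rfl⟩
    exact Aux.upper hψ hΩ hfix hε hQb hq1 σ hσ hσtr hσψ
  have hSb : BddAbove S := ⟨_, hub⟩
  -- image of Q in S
  have himg : ∀ x ∈ Q, (1 - ε) + ε * x ∈ S := by
    rintro x ⟨φ, h1, h2, rfl⟩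
    obtain ⟨hc1, hc2, hc3, hc4⟩ := Aux.constr hψ hΩ.isHermitian hfix hε hε1 φ h1 h2 _ rfl
    exact ⟨vecMulVec _ (star _), hc1, hc2, hc3, hc4.symm⟩
  have hSne : S.Nonempty := by
    obtain ⟨x, hx⟩ := hQne
    exact ⟨_, himg x hx⟩
  constructor
  · apply le_antisymm (csSup_le hSne hub)
    have hkey : qparam Ω ψ ≤ (sSup S - (1 - ε)) / ε := by
      rw [hq]
      refine csSup_le hQne fun x hx => ?_
      rw [le_div_iff₀ hε]
      have := le_csSup hSb (himg x hx)
      linarith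
    rw [le_div_iff₀ hε] at hkey
    linarith
  · intro φs h1 h2 h3 χ hχ
    obtain ⟨hc1, hc2, hc3, hc4⟩ := Aux.constr hψ hΩ.isHermitian hfix hε hε1 φs h1 h2 χ hχ
    exact ⟨hc1, hc2, hc3, by rw [hc4, h3]⟩
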